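/- Let γ : ℝ → ℝ be twice continuously differentiable with γ' and γ'' bounded. For θ ∈ ℝ let R(θ) be the 3×3 matrix of rotation about the x₃-axis, R(θ) = [[cos θ, −sin θ, 0], [sin θ, cos θ, 0], [0, 0, 1]]. For x = (x₁, x₂, x₃) ∈ ℝ³ define w(x) = γ'(x₃)(cos(γ(x₃)) x₁ + sin(γ(x₃)) x₂), let W(x) be the 3×3 matrix equal to the identity except that its (2,3) entry equals w(x), and set D(x) = R(γ(x₃)) W(x). Then det D(x) = 1 for every x ∈ ℝ³, and for every bounded set S ⊂ ℝ³ the matrix-valued map x ↦ D(x) is Lipschitz continuous on S. -/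

import Mathlib

open Set

/-- Euclidean norm on `ℝ³` (realized as `Fin 3 → ℝ`). -/
noncomputable def enorm3 (x : Fin 3 → ℝ) : ℝ := Real.sqrt (∑ i, x i ^ 2)

/-- The (Euclidean) operator norm of a `3 × 3` real matrix. -/
noncomputable def opNorm3 (A : Matrix (Fin 3) (Fin 3) ℝ) : ℝ :=
  ‖(Matrix.toEuclideanCLM (𝕜 := ℝ) A : EuclideanSpace ℝ (Fin 3) →L[ℝ] EuclideanSpace ℝ (Fin 3))‖

/-- Rotation about the `x₃`-axis by angle `θ`. -/
noncomputable def rotZ (θ : ℝ) : Matrix (Fin 3) (Fin 3) ℝ :=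
  !![Real.cos θ, -Real.sin θ, 0; Real.sin θ, Real.cos θ, 0; 0, 0, 1]

/-- The shear function `w(x) = γ'(x₃)(cos(γ(x₃)) x₁ + sin(γ(x₃)) x₂)`. -/
noncomputable def wFun (γ : ℝ → ℝ) (x : Fin 3 → ℝ) : ℝ :=
  deriv γ (x 2) * (Real.cos (γ (x 2)) * x 0 + Real.sin (γ (x 2)) * x 1)

/-- The matrix `W(x)`: the identity except that its `(2,3)` entry equals `w(x)`. -/
noncomputable def Wmat (γ : ℝ → ℝ) (x : Fin 3 → ℝ) : Matrix (Fin 3) (Fin 3) ℝ :=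
  !![1, 0, 0; 0, 1, wFun γ x; 0, 0, 1]

/-- The transformation matrix `D(x) = R(γ(x₃)) W(x)` of the locally-periodic approximation. -/
noncomputable def Dmat (γ : ℝ → ℝ) (x : Fin 3 → ℝ) : Matrix (Fin 3) (Fin 3) ℝ :=
  rotZ (γ (x 2)) * Wmat γ x

lemma enorm3_nonneg (v : Fin 3 → ℝ) : 0 ≤ enorm3 v := Real.sqrt_nonneg _

lemma abs_le_enorm3 (v : Fin 3 → ℝ) (i : Fin 3) : |v i| ≤ enorm3 v := by
  rw [enorm3, show |v i| = Real.sqrt (v i ^ 2) by rw [Real.sqrt_sq_eq_abs]]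
  apply Real.sqrt_le_sqrt
  exact Finset.single_le_sum (f := fun j => v j ^ 2) (fun j _ => sq_nonneg _) (Finset.mem_univ i)

lemma norm_le_enorm3 (v : Fin 3 → ℝ) : ‖v‖ ≤ enorm3 v := by
  rw [pi_norm_le_iff_of_nonneg (enorm3_nonneg v)]
  intro i
  rw [Real.norm_eq_abs]; exact abs_le_enorm3 v i

lemma euclid_norm (x : EuclideanSpace ℝ (Fin 3)) :
    ‖x‖ = enorm3 (WithLp.equiv 2 (Fin 3 → ℝ) x) := by
  rw [EuclideanSpace.norm_eq, enorm3]
  congr 1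
  refine Finset.sum_congr rfl fun i _ => ?_
  simp [Real.norm_eq_abs, sq_abs]

lemma lipOn (g : (Fin 3 → ℝ) → ℝ) (hg : ContDiff ℝ 1 g) {S : Set (Fin 3 → ℝ)}
    (hS : Bornology.IsBounded S) :
    ∃ K : ℝ, 0 ≤ K ∧ ∀ x ∈ S, ∀ y ∈ S, |g x - g y| ≤ K * enorm3 (x - y) := by
  obtain ⟨r, hr⟩ := hS.subset_closedBall 0
  obtain ⟨C, hC⟩ := (isCompact_closedBall (0 : Fin 3 → ℝ) r).exists_bound_of_continuousOn
    (hg.continuous_fderiv one_ne_zero).continuousOn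
  refine ⟨max C 0, le_max_right _ _, fun x hx y hy => ?_⟩
  have h1 : ‖g x - g y‖ ≤ max C 0 * ‖x - y‖ :=
    (convex_closedBall (0 : Fin 3 → ℝ) r).norm_image_sub_le_of_norm_fderiv_le
      (fun z _ => (hg.differentiable one_ne_zero).differentiableAt)
      (fun z hz => (hC z hz).trans (le_max_left _ _)) (hr hy) (hr hx)
  rw [Real.norm_eq_abs] at h1
  exact h1.trans (mul_le_mul_of_nonneg_left (norm_le_enorm3 _) (le_max_right _ _))

lemma opNorm3_le (A : Matrix (Fin 3) (Fin 3) ℝ) :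
    opNorm3 A ≤ ∑ i, ∑ j, |A i j| := by
  have hsum : (0:ℝ) ≤ ∑ i, ∑ j, |A i j| :=
    Finset.sum_nonneg fun i _ => Finset.sum_nonneg fun j _ => abs_nonneg _
  refine ContinuousLinearMap.opNorm_le_bound _ hsum fun x => ?_
  set y := Matrix.toEuclideanCLM (𝕜 := ℝ) A x with hy
  have happ : ∀ i, y i = ∑ j, A i j * x j := by
    intro i; rfl
  have hxj : ∀ j : Fin 3, |x j| ≤ ‖x‖ := by
    intro j
    rw [euclid_norm x]
    exact abs_le_enorm3 _ j
  have hyle : ∀ i, |y i| ≤ (∑ j, |A i j|) * ‖x‖ := by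
    intro i
    rw [happ i]
    calc |∑ j, A i j * x j| ≤ ∑ j, |A i j * x j| := Finset.abs_sum_le_sum_abs _ _
      _ ≤ ∑ j, |A i j| * ‖x‖ := by
          refine Finset.sum_le_sum fun j _ => ?_
          rw [abs_mul]
          exact mul_le_mul_of_nonneg_left (hxj j) (abs_nonneg _)
      _ = (∑ j, |A i j|) * ‖x‖ := (Finset.sum_mul _ _ _).symm
  have hny : ‖y‖ ≤ |y 0| + |y 1| + |y 2| := by
    rw [euclid_norm y, enorm3]
    have h1 : (∑ i, (WithLp.equiv 2 (Fin 3 → ℝ) y) i ^ 2) ≤ (|y 0| + |y 1| + |y 2|) ^ 2 := by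
      have e0 : (WithLp.equiv 2 (Fin 3 → ℝ) y) = fun i => y i := rfl
      rw [e0, Fin.sum_univ_three]
      nlinarith [abs_nonneg (y 0), abs_nonneg (y 1), abs_nonneg (y 2),
        sq_abs (y 0), sq_abs (y 1), sq_abs (y 2),
        mul_nonneg (abs_nonneg (y 0)) (abs_nonneg (y 1)),
        mul_nonneg (abs_nonneg (y 0)) (abs_nonneg (y 2)),
        mul_nonneg (abs_nonneg (y 1)) (abs_nonneg (y 2))]
    calc Real.sqrt (∑ i, (WithLp.equiv 2 (Fin 3 → ℝ) y) i ^ 2)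
        ≤ Real.sqrt ((|y 0| + |y 1| + |y 2|) ^ 2) := Real.sqrt_le_sqrt h1
      _ = |y 0| + |y 1| + |y 2| := by
          rw [Real.sqrt_sq (by positivity)]
  calc ‖y‖ ≤ |y 0| + |y 1| + |y 2| := hny
    _ ≤ (∑ j, |A 0 j|) * ‖x‖ + (∑ j, |A 1 j|) * ‖x‖ + (∑ j, |A 2 j|) * ‖x‖ := by
        have := hyle 0; have := hyle 1; have := hyle 2; linarith
    _ = (∑ i, ∑ j, |A i j|) * ‖x‖ := by simp [Fin.sum_univ_three]; ring

lemma Dmat_eq (γ : ℝ → ℝ) (x : Fin 3 → ℝ) :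
    Dmat γ x = !![Real.cos (γ (x 2)), -Real.sin (γ (x 2)), -(Real.sin (γ (x 2)) * wFun γ x);
                  Real.sin (γ (x 2)), Real.cos (γ (x 2)), Real.cos (γ (x 2)) * wFun γ x;
                  0, 0, 1] := by
  rw [Dmat, rotZ, Wmat, Matrix.mul_fin_three]
  norm_num

lemma coord_cd (i : Fin 3) : ContDiff ℝ 1 (fun x : Fin 3 → ℝ => x i) :=
  (contDiff_pi.mp contDiff_id) i

lemma deriv_cd (γ : ℝ → ℝ) (hγ : ContDiff ℝ 2 γ) : ContDiff ℝ 1 (deriv γ) := by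
  have h2 : ContDiff ℝ ((1 : WithTop ℕ∞) + 1) γ := by
    have : ((2 : WithTop ℕ∞)) = (1 : WithTop ℕ∞) + 1 := by norm_num
    exact this ▸ hγ
  exact (contDiff_succ_iff_deriv.mp h2).2.2

lemma cos_cd (γ : ℝ → ℝ) (hγ : ContDiff ℝ 2 γ) :
    ContDiff ℝ 1 (fun x : Fin 3 → ℝ => Real.cos (γ (x 2))) :=
  (Real.contDiff_cos.of_le le_top).comp ((hγ.of_le (by norm_num)).comp (coord_cd 2))

lemma sin_cd (γ : ℝ → ℝ) (hγ : ContDiff ℝ 2 γ) :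
    ContDiff ℝ 1 (fun x : Fin 3 → ℝ => Real.sin (γ (x 2))) :=
  (Real.contDiff_sin.of_le le_top).comp ((hγ.of_le (by norm_num)).comp (coord_cd 2))

lemma w_cd (γ : ℝ → ℝ) (hγ : ContDiff ℝ 2 γ) : ContDiff ℝ 1 (wFun γ) := by
  unfold wFun
  exact ((deriv_cd γ hγ).comp (coord_cd 2)).mul
    (((cos_cd γ hγ).mul (coord_cd 0)).add ((sin_cd γ hγ).mul (coord_cd 1)))

/-- `D(x) = R(γ(x₃)) W(x)` has determinant one and is Lipschitz continuous on every
bounded subset of `ℝ³`, provided `γ` is `C²` with bounded first and second derivatives. -/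
theorem stmt_10 (γ : ℝ → ℝ) (hγ : ContDiff ℝ 2 γ)
    (hγ' : ∃ Λ : ℝ, ∀ s : ℝ, |deriv γ s| ≤ Λ)
    (hγ'' : ∃ Λ : ℝ, ∀ s : ℝ, |deriv (deriv γ) s| ≤ Λ) :
    (∀ x : Fin 3 → ℝ, (Dmat γ x).det = 1) ∧
    (∀ S : Set (Fin 3 → ℝ), Bornology.IsBounded S →
      ∃ K : ℝ, ∀ x ∈ S, ∀ y ∈ S, opNorm3 (Dmat γ x - Dmat γ y) ≤ K * enorm3 (x - y)) := by
  constructor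
  · intro x
    rw [Dmat_eq, Matrix.det_fin_three]
    simp
    nlinarith [Real.sin_sq_add_cos_sq (γ (x 2))]
  · intro S hS
    obtain ⟨K1, hK1, hL1⟩ := lipOn _ (cos_cd γ hγ) hS
    obtain ⟨K2, hK2, hL2⟩ := lipOn _ (sin_cd γ hγ) hS
    obtain ⟨K3, hK3, hL3⟩ := lipOn _ ((sin_cd γ hγ).mul (w_cd γ hγ)) hS
    obtain ⟨K4, hK4, hL4⟩ := lipOn _ ((cos_cd γ hγ).mul (w_cd γ hγ)) hS
    refine ⟨2 * K1 + 2 * K2 + K3 + K4, fun x hx y hy => ?_⟩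
    have h1 := hL1 x hx y hy
    have h2 := hL2 x hx y hy
    have h3 := hL3 x hx y hy
    have h4 := hL4 x hx y hy
    set e := enorm3 (x - y) with he
    have hbound := opNorm3_le (Dmat γ x - Dmat γ y)
    have ea : ∀ a b : ℝ, |-a + b| = |a - b| := fun a b => by
      rw [show -a + b = -(a - b) by ring, abs_neg]
    have hK : (2 * K1 + 2 * K2 + K3 + K4) * e
        = 2 * (K1 * e) + 2 * (K2 * e) + K3 * e + K4 * e := by ring
    refine hbound.trans ?_
    simp [Dmat_eq, Fin.sum_univ_three, Matrix.sub_apply]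
    rw [ea, ea, hK]
    linarith
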